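/- Every mixed increasing-decreasing instance of a-GASP admits a Nash stable assignment. -/

import Mathlib

/-- The group of agents assigned to activity `a` under assignment `π`
(`none` stands for the void activity `a_∅`). -/
def grp {ι α : Type*} [Fintype ι] [DecidableEq α] (π : ι → Option α) (a : α) : Finset ι :=
  Finset.univ.filter (fun i => π i = some a)

/-- An assignment is individually rational if every agent assigned to a non-void
activity `a` approves the alternative `(a, size of the group doing a)`.
`S i a` is the set of group sizes `k` such that agent `i` approves `(a, k)`. -/
def IndivRat {ι α : Type*} [Fintype ι] [DecidableEq α]
    (S : ι → α → Finset ℕ) (π : ι → Option α) : Prop :=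
  ∀ i a, π i = some a → (grp π a).card ∈ S i a

/-- Nash stability: individual rationality plus no agent assigned to the void
activity approves joining an existing group. -/
def NashStable {ι α : Type*} [Fintype ι] [DecidableEq α]
    (S : ι → α → Finset ℕ) (π : ι → Option α) : Prop :=
  IndivRat S π ∧ ∀ i a, π i = none → (grp π a).card + 1 ∉ S i a

/-- The number of agents assigned to a non-void activity. -/
def numActive {ι α : Type*} [Fintype ι] [DecidableEq α] (π : ι → Option α) : ℕ :=
  (Finset.univ.filter (fun i => π i ≠ none)).card

lemma mem_grp {ι α : Type*} [Fintype ι] [DecidableEq α] {π : ι → Option α} {a : α} {i : ι} :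
    i ∈ grp π a ↔ π i = some a := by simp [grp]

lemma sup_Icc_one (u : ℕ) : (Finset.Icc 1 u).sup id = u := by
  rcases Nat.eq_zero_or_pos u with h | h
  · subst h; simp
  · refine le_antisymm (Finset.sup_le fun x hx => (Finset.mem_Icc.mp hx).2) ?_
    exact Finset.le_sup (f := id) (Finset.mem_Icc.mpr ⟨h, le_rfl⟩)


/-- Every mixed increasing-decreasing a-GASP instance (activities split into
A⁺ and A⁻; approved sizes are up-sets [ℓ, n] for activities in A⁺ and down-sets
[1, u] for activities in A⁻) admits a Nash stable assignment. -/
theorem stmt8 {ι α : Type*} [Fintype ι] [DecidableEq ι] [DecidableEq α] [Fintype α]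
    (S : ι → α → Finset ℕ) (Apos : α → Prop)
    (hinc : ∀ (i : ι) (a : α), Apos a →
      ∃ l : ℕ, 1 ≤ l ∧ S i a = Finset.Icc l (Fintype.card ι))
    (hdec : ∀ (i : ι) (a : α), ¬ Apos a → ∃ u : ℕ, S i a = Finset.Icc 1 u) :
    ∃ π : ι → Option α, NashStable S π := by
  classical
  set U : ι → α → ℕ := fun i a => (S i a).sup id with hUdef
  have hUdec : ∀ i a, ¬ Apos a → S i a = Finset.Icc 1 (U i a) := by
    intro i a h
    obtain ⟨u, hu⟩ := hdec i a h
    have : U i a = u := by rw [hUdef]; simp only; rw [hu, sup_Icc_one]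
    rw [this, hu]
  set w : ι → Option α → ℕ := fun i x => x.elim 0 (U i) with hwdef
  set Φ : (ι → Option α) → ℕ := fun π => ∑ i, w i (π i) with hΦdef
  set C : ℕ := ∑ i, ∑ a, U i a with hCdef
  have hΦle : ∀ π : ι → Option α, Φ π ≤ C := by
    intro π
    refine Finset.sum_le_sum fun i _ => ?_
    cases h : π i with
    | none => simp [hwdef]
    | some a =>
        simpa [hwdef] using Finset.single_le_sum (f := fun b => U i b)
          (fun b _ => Nat.zero_le _) (Finset.mem_univ a)
  set f : (ι → Option α) → ℕ := fun π => numActive π * (C + 1) + Φ π with hfdef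
  set T : Finset (ι → Option α) := Finset.univ.filter (IndivRat S) with hTdef
  have hTne : T.Nonempty := by
    refine ⟨fun _ => none, ?_⟩
    simp only [hTdef, Finset.mem_filter, Finset.mem_univ, true_and]
    intro i a h; simp at h
  obtain ⟨π, hπT, hmax⟩ := Finset.exists_max_image T f hTne
  have hIR : IndivRat S π := by
    simpa [hTdef] using (Finset.mem_filter.mp hπT).2
  refine ⟨π, hIR, ?_⟩
  intro i a hnone hmem
  set k := (grp π a).card with hkdef
  have hinotg : i ∉ grp π a := by simp [mem_grp, hnone]
  -- Claim A: if all current members also approve k+1, we can add i.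
  have claimA : ¬ ∀ j ∈ grp π a, k + 1 ∈ S j a := by
    intro hall
    set π' : ι → Option α := Function.update π i (some a) with hπ'
    have hgrpa : grp π' a = insert i (grp π a) := by
      ext x
      simp only [mem_grp, Finset.mem_insert, hπ']
      by_cases hx : x = i
      · subst hx; simp
      · simp [Function.update_of_ne hx, mem_grp, hx]
    have hgrpa_card : (grp π' a).card = k + 1 := by
      rw [hgrpa, Finset.card_insert_of_notMem hinotg]
    have hgrpb : ∀ b, b ≠ a → grp π' b = grp π b := by
      intro b hb
      ext x
      simp only [mem_grp, hπ']
      by_cases hx : x = i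
      · subst hx; simp [hnone, Option.some_inj, (fun h => hb h.symm : a = b → False)]
        intro h; exact hb h.symm
      · simp [Function.update_of_ne hx]
    have hIR' : IndivRat S π' := by
      intro x b hx
      by_cases hxi : x = i
      · subst hxi
        have : (some a : Option α) = some b := by rwa [hπ', Function.update_self] at hx
        obtain rfl : a = b := Option.some_inj.mp this
        rw [hgrpa_card]; exact hmem
      · have hxb : π x = some b := by rwa [hπ', Function.update_of_ne hxi] at hx
        by_cases hba : b = a
        · subst hba
          rw [hgrpa_card]
          exact hall x (mem_grp.mpr hxb)
        · rw [hgrpb b hba]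
          exact hIR x b hxb
    have hT' : π' ∈ T := by
      simp only [hTdef, Finset.mem_filter, Finset.mem_univ, true_and]; exact hIR'
    have hnum : numActive π' = numActive π + 1 := by
      have : Finset.univ.filter (fun x => π' x ≠ none)
          = insert i (Finset.univ.filter (fun x => π x ≠ none)) := by
        ext x
        simp only [Finset.mem_filter, Finset.mem_univ, true_and, Finset.mem_insert, hπ']
        by_cases hx : x = i
        · subst hx; simp
        · simp [Function.update_of_ne hx, hx]
      rw [numActive, this, Finset.card_insert_of_notMem, numActive]
      simp [hnone]
    have hΦ' : Φ π' = Φ π + U i a := by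
      have h1 : Φ π' = w i (π' i) + ∑ x ∈ Finset.univ.erase i, w x (π' x) :=
        (Finset.add_sum_erase _ _ (Finset.mem_univ i)).symm
      have h2 : Φ π = w i (π i) + ∑ x ∈ Finset.univ.erase i, w x (π x) :=
        (Finset.add_sum_erase _ _ (Finset.mem_univ i)).symm
      have h3 : ∑ x ∈ Finset.univ.erase i, w x (π' x)
          = ∑ x ∈ Finset.univ.erase i, w x (π x) := by
        refine Finset.sum_congr rfl fun x hx => ?_
        rw [hπ', Function.update_of_ne (Finset.ne_of_mem_erase hx)]
      rw [h1, h3, h2, hπ', Function.update_self, hnone]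
      simp [hwdef]; ring
    have : f π' ≤ f π := hmax π' hT'
    rw [hfdef] at this
    simp only at this
    rw [hnum, hΦ', add_mul, one_mul] at this
    have hb := hΦle π
    omega
  by_cases hA : Apos a
  · -- increasing activity: everyone approves k+1
    refine claimA fun j hj => ?_
    obtain ⟨l, hl1, hSj⟩ := hinc j a hA
    have hjk : k ∈ S j a := hIR j a (mem_grp.mp hj)
    rw [hSj] at hjk ⊢
    rw [Finset.mem_Icc] at hjk ⊢
    have hcard : k + 1 ≤ Fintype.card ι := by
      have h1 := Finset.card_le_univ (insert i (grp π a))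
      rw [Finset.card_insert_of_notMem hinotg] at h1
      calc k + 1 ≤ Finset.univ.card := h1
        _ = Fintype.card ι := Finset.card_univ
    exact ⟨le_trans hjk.1 (Nat.le_succ k), hcard⟩
  · -- decreasing activity
    have hUi : k + 1 ≤ U i a := by
      have := hmem; rw [hUdec i a hA, Finset.mem_Icc] at this; exact this.2
    rcases Classical.em (∀ j ∈ grp π a, k + 1 ∈ S j a) with hall | hnall
    · exact claimA hall
    push_neg at hnall
    obtain ⟨j, hjmem, hjnot⟩ := hnall
    have hπj : π j = some a := mem_grp.mp hjmem
    have hij : i ≠ j := by intro h; rw [h, hπj] at hnone; exact Option.some_ne_none a hnone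
    have hjk : k ∈ S j a := hIR j a hπj
    have hUj : U j a = k := by
      rw [hUdec j a hA, Finset.mem_Icc] at hjk hjnot
      push_neg at hjnot
      have h1 : 1 ≤ k := hjk.1
      have := hjnot (by omega)
      omega
    have hk1 : 1 ≤ k := by rw [hUdec j a hA, Finset.mem_Icc] at hjk; exact hjk.1
    -- swap: remove j, add i
    set π'' : ι → Option α := Function.update (Function.update π j none) i (some a) with hπ''
    have hval : ∀ x, π'' x = if x = i then some a else if x = j then none else π x := by
      intro x
      by_cases hx : x = i
      · subst hx; simp [hπ'']
      · by_cases hx' : x = j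
        · subst hx'; simp [hπ'', Function.update_of_ne hx, hx]
        · simp [hπ'', Function.update_of_ne hx, Function.update_of_ne hx', hx, hx']
    have hgrpa : grp π'' a = insert i ((grp π a).erase j) := by
      ext x
      simp only [mem_grp, Finset.mem_insert, Finset.mem_erase, hval x]
      by_cases hx : x = i
      · subst hx; simp
      · by_cases hx' : x = j
        · subst hx'; simp [hx]
        · simp [hx, hx', mem_grp]
    have hgrpa_card : (grp π'' a).card = k := by
      rw [hgrpa, Finset.card_insert_of_notMem (fun h => hinotg (Finset.mem_of_mem_erase h)),
        Finset.card_erase_of_mem hjmem]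
      omega
    have hgrpb : ∀ b, b ≠ a → grp π'' b = grp π b := by
      intro b hb
      ext x
      simp only [mem_grp, hval x]
      by_cases hx : x = i
      · subst hx; simp [hnone]
        intro h; exact hb h.symm
      · by_cases hx' : x = j
        · subst hx'; simp [hx, hπj]
          intro h; exact hb h.symm
        · simp [hx, hx']
    have hIR'' : IndivRat S π'' := by
      intro x b hx
      rw [hval x] at hx
      by_cases hxi : x = i
      · rw [hxi] at hx ⊢
        rw [if_pos rfl] at hx
        obtain rfl : a = b := Option.some_inj.mp hx
        rw [hgrpa_card, hUdec i a hA, Finset.mem_Icc]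
        omega
      · by_cases hxj : x = j
        · subst hxj; simp [hxi] at hx
        · simp only [if_neg hxi, if_neg hxj] at hx
          by_cases hba : b = a
          · rw [hba] at hx ⊢
            rw [hgrpa_card]
            exact hIR x a hx
          · rw [hgrpb b hba]
            exact hIR x b hx
    have hT'' : π'' ∈ T := by
      simp only [hTdef, Finset.mem_filter, Finset.mem_univ, true_and]; exact hIR''
    have hnum : numActive π'' = numActive π := by
      have hset : Finset.univ.filter (fun x => π'' x ≠ none)
          = insert i ((Finset.univ.filter (fun x => π x ≠ none)).erase j) := by
        ext x
        simp only [Finset.mem_filter, Finset.mem_univ, true_and, Finset.mem_insert,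
          Finset.mem_erase, hval x]
        by_cases hx : x = i
        · subst hx; simp
        · by_cases hx' : x = j
          · subst hx'; simp [hx]
          · simp [hx, hx']
      have hjin : j ∈ Finset.univ.filter (fun x => π x ≠ none) := by
        simp [hπj]
      have hiout : i ∉ (Finset.univ.filter (fun x => π x ≠ none)).erase j := by
        simp [hnone]
      have hpos : 1 ≤ (Finset.univ.filter (fun x => π x ≠ none)).card :=
        Finset.card_pos.mpr ⟨j, hjin⟩
      rw [numActive, hset, Finset.card_insert_of_notMem hiout,
        Finset.card_erase_of_mem hjin, numActive]
      omega
    have hΦ'' : Φ π'' + U j a = Φ π + U i a := by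
      have hsplit : ∀ g : ι → Option α, Φ g = w i (g i) +
          (w j (g j) + ∑ x ∈ (Finset.univ.erase i).erase j, w x (g x)) := by
        intro g
        rw [hΦdef]
        simp only
        rw [← Finset.add_sum_erase _ _ (Finset.mem_univ i),
          ← Finset.add_sum_erase _ (fun x => w x (g x))
            (Finset.mem_erase.mpr ⟨(Ne.symm hij), Finset.mem_univ j⟩)]
      have hsum : ∑ x ∈ (Finset.univ.erase i).erase j, w x (π'' x)
          = ∑ x ∈ (Finset.univ.erase i).erase j, w x (π x) := by
        refine Finset.sum_congr rfl fun x hx => ?_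
        rw [hval x, if_neg (Finset.ne_of_mem_erase (Finset.mem_of_mem_erase hx)),
          if_neg (Finset.ne_of_mem_erase hx)]
      rw [hsplit π'', hsplit π, hsum, hval i, hval j, if_pos rfl, if_neg (Ne.symm hij),
        if_pos rfl, hnone, hπj]
      simp [hwdef]
      ring
    have : f π'' ≤ f π := hmax π'' hT''
    rw [hfdef] at this
    simp only at this
    rw [hnum] at this
    omega
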